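/- For real numbers d > 1 and x, y > 0 with x ≠ y, the function ψ(x,y,d) = x^{d-1} y^{-d} + x^{1-d} y^{d} - (1-d)(x + 1/x) - d(y + 1/y) is strictly positive. -/

import Mathlib

open Real

lemma amgm2_strict {a b w v : ℝ} (ha : 0 < a) (hb : 0 < b) (hab : a ≠ b)
    (hw : 0 < w) (hv : 0 < v) (hwv : w + v = 1) :
    a ^ w * b ^ v < w * a + v * b := by
  have hlog : Real.log a ≠ Real.log b := by
    intro h
    apply hab
    calc a = Real.exp (Real.log a) := (Real.exp_log ha).symm
      _ = Real.exp (Real.log b) := by rw [h]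
      _ = b := Real.exp_log hb
  have key := strictConvexOn_exp.2 (Set.mem_univ (Real.log a)) (Set.mem_univ (Real.log b))
    hlog hw hv hwv
  simp only [smul_eq_mul, Real.exp_log ha, Real.exp_log hb] at key
  calc a ^ w * b ^ v
      = Real.exp (Real.log a * w) * Real.exp (Real.log b * v) := by
        rw [Real.rpow_def_of_pos ha, Real.rpow_def_of_pos hb]
    _ = Real.exp (w * Real.log a + v * Real.log b) := by
        rw [← Real.exp_add]; ring_nf
    _ < w * a + v * b := key

theorem psi_pos (d x y : ℝ) (hd : 1 < d) (hx : 0 < x) (hy : 0 < y) (hxy : x ≠ y) :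
    0 < x ^ (d - 1) * y ^ (-d) + x ^ (1 - d) * y ^ d
        - (1 - d) * (x + 1 / x) - d * (y + 1 / y) := by
  have hd0 : (0:ℝ) < d := lt_trans one_pos hd
  have hd0' : d ≠ 0 := hd0.ne'
  have hw : (0:ℝ) < 1 / d := by positivity
  have hv : (0:ℝ) < 1 - 1 / d := by
    have : 1 / d < 1 := by rw [div_lt_one hd0]; exact hd
    linarith
  have hwv : 1 / d + (1 - 1 / d) = 1 := by ring
  have ha1 : 0 < x ^ (d - 1) * y ^ (-d) :=
    mul_pos (Real.rpow_pos_of_pos hx _) (Real.rpow_pos_of_pos hy _)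
  have ha2 : 0 < x ^ (1 - d) * y ^ d :=
    mul_pos (Real.rpow_pos_of_pos hx _) (Real.rpow_pos_of_pos hy _)
  have hxinv : (0:ℝ) < x⁻¹ := by positivity
  -- strictness: a1 ≠ 1/x
  have hne : x ^ (d - 1) * y ^ (-d) ≠ x⁻¹ := by
    intro h
    apply hxy
    have hxd : x ^ d = y ^ d := by
      have h1 : x ^ (d - 1) * x = x ^ d := by
        rw [← Real.rpow_add_one hx.ne' (d - 1)]; ring_nf
      have h2 : x ^ d * y ^ (-d) = 1 := by
        have := congrArg (· * x) h
        field_simp at this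
        nlinarith [this, Real.rpow_pos_of_pos hy (-d), h1]
      have h3 : y ^ (-d) = (y ^ d)⁻¹ := by
        rw [Real.rpow_neg hy.le]
      rw [h3] at h2
      have hyd : (0:ℝ) < y ^ d := Real.rpow_pos_of_pos hy _
      field_simp at h2
      linarith
    rcases lt_trichotomy x y with h | h | h
    · exfalso
      have := Real.rpow_lt_rpow hx.le h hd0
      linarith [hxd ▸ this]
    · exact h
    · exfalso
      have := Real.rpow_lt_rpow hy.le h hd0
      linarith [hxd ▸ this]
  -- first (strict) AM-GM
  have key1 : (x ^ (d - 1) * y ^ (-d)) ^ (1/d) * (x⁻¹) ^ (1 - 1/d)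
      < (1/d) * (x ^ (d - 1) * y ^ (-d)) + (1 - 1/d) * x⁻¹ :=
    amgm2_strict ha1 hxinv hne hw hv hwv
  -- second (non-strict) AM-GM
  have key2 : (x ^ (1 - d) * y ^ d) ^ (1/d) * x ^ (1 - 1/d)
      ≤ (1/d) * (x ^ (1 - d) * y ^ d) + (1 - 1/d) * x :=
    Real.geom_mean_le_arith_mean2_weighted hw.le hv.le ha2.le hx.le hwv
  -- compute the geometric means
  have g1 : (x ^ (d - 1) * y ^ (-d)) ^ (1/d) * (x⁻¹) ^ (1 - 1/d) = y⁻¹ := by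
    rw [Real.mul_rpow (Real.rpow_pos_of_pos hx _).le (Real.rpow_pos_of_pos hy _).le,
      ← Real.rpow_neg_one x]
    rw [← Real.rpow_mul hx.le, ← Real.rpow_mul hy.le, ← Real.rpow_mul hx.le]
    rw [mul_right_comm, ← Real.rpow_add hx]
    have he : (d - 1) * (1/d) + -1 * (1 - 1/d) = 0 := by field_simp; ring
    have he2 : -d * (1/d) = -1 := by field_simp
    rw [he, he2, Real.rpow_zero, one_mul, Real.rpow_neg_one]
  have g2 : (x ^ (1 - d) * y ^ d) ^ (1/d) * x ^ (1 - 1/d) = y := by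
    rw [Real.mul_rpow (Real.rpow_pos_of_pos hx _).le (Real.rpow_pos_of_pos hy _).le,
      ← Real.rpow_mul hx.le, ← Real.rpow_mul hy.le]
    rw [mul_right_comm, ← Real.rpow_add hx]
    have he : (1 - d) * (1/d) + (1 - 1/d) = 0 := by field_simp; ring
    have he2 : d * (1/d) = 1 := by field_simp
    rw [he, he2, Real.rpow_zero, one_mul, Real.rpow_one]
  rw [g1] at key1
  rw [g2] at key2
  have hy' : y⁻¹ = 1 / y := by rw [inv_eq_one_div]
  have hx' : x⁻¹ = 1 / x := by rw [inv_eq_one_div]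
  rw [hy', hx'] at key1
  -- multiply by d and combine
  have k1 : d * (1/y) < x ^ (d - 1) * y ^ (-d) + (d - 1) * (1/x) := by
    have := mul_lt_mul_of_pos_left key1 hd0
    have hdd : d * (1/d) = 1 := by field_simp
    nlinarith [this]
  have k2 : d * y ≤ x ^ (1 - d) * y ^ d + (d - 1) * x := by
    have := mul_le_mul_of_nonneg_left key2 hd0.le
    have hdd : d * (1/d) = 1 := by field_simp
    nlinarith [this]
  nlinarith [k1, k2]
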